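/- In the category of sets (Type u), every pullback stable essential monomorphism is an isomorphism. -/

import Mathlib

open CategoryTheory Limits

universe u

/-- A morphism `m` is an essential monomorphism if it is a monomorphism and every
morphism `f` such that `m ≫ f` is a monomorphism is itself a monomorphism. -/
def IsEssentialMono {C : Type*} [CategoryTheory.Category C] {S A : C} (m : S ⟶ A) : Prop :=
  CategoryTheory.Mono m ∧
    ∀ ⦃B : C⦄ (f : A ⟶ B), CategoryTheory.Mono (m ≫ f) → CategoryTheory.Mono f

/-- A morphism `m : S ⟶ A` is a pullback stable essential monomorphism if for every
morphism `u : X ⟶ A` the pullback projection `S ×_A X ⟶ X` of `m` along `u` is an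
essential monomorphism. -/
def IsStableEssentialMono {C : Type*} [CategoryTheory.Category C]
    [CategoryTheory.Limits.HasPullbacks C] {S A : C} (m : S ⟶ A) : Prop :=
  ∀ ⦃X : C⦄ (u : X ⟶ A), IsEssentialMono (CategoryTheory.Limits.pullback.snd m u)

/-- In the category of sets, every pullback stable essential monomorphism is an
isomorphism. -/
theorem stableEssentialMono_in_types_isIso {S A : Type u} (m : S ⟶ A)
    (h : IsStableEssentialMono m) : IsIso m := by
  rw [CategoryTheory.isIso_iff_bijective]
  constructor
  · -- injectivity
    intro s1 s2 hs
    have hmono := (h (𝟙 A)).1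
    let l1 : (PUnit.{u+1} : Type u) ⟶ pullback m (𝟙 A) :=
      pullback.lift (TypeCat.ofHom fun _ => s1) (TypeCat.ofHom fun _ => m s1) (by ext; rfl)
    let l2 : (PUnit.{u+1} : Type u) ⟶ pullback m (𝟙 A) :=
      pullback.lift (TypeCat.ofHom fun _ => s2) (TypeCat.ofHom fun _ => m s1) (by ext; exact hs.symm)
    have hl : l1 = l2 := by
      rw [← cancel_mono (pullback.snd m (𝟙 A))]
      simp only [l1, l2]
      rw [pullback.lift_snd, pullback.lift_snd]
    have h1 : pullback.fst m (𝟙 A) (l1 PUnit.unit) = s1 := by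
      have := ConcreteCategory.congr_hom (pullback.lift_fst (f := m) (g := 𝟙 A)
        (TypeCat.ofHom fun _ => s1) (TypeCat.ofHom fun _ => m s1) (by ext; rfl)) PUnit.unit
      simpa [l1] using this
    have h2 : pullback.fst m (𝟙 A) (l2 PUnit.unit) = s2 := by
      have := ConcreteCategory.congr_hom (pullback.lift_fst (f := m) (g := 𝟙 A)
        (TypeCat.ofHom fun _ => s2) (TypeCat.ofHom fun _ => m s1) (by ext; exact hs.symm)) PUnit.unit
      simpa [l2] using this
    rw [← h1, ← h2, hl]
  · -- surjectivity
    intro a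
    by_contra hna
    push_neg at hna
    let u : (ULift.{u} Bool : Type u) ⟶ A := TypeCat.ofHom fun _ => a
    have hempty : ∀ p : pullback m u, False := by
      intro p
      exact hna (pullback.fst m u p)
        (ConcreteCategory.congr_hom (pullback.condition (f := m) (g := u)) p)
    let f : (ULift.{u} Bool : Type u) ⟶ (PUnit.{u+1} : Type u) := TypeCat.ofHom fun _ => PUnit.unit
    have hmf : Mono (pullback.snd m u ≫ f) := by
      rw [CategoryTheory.mono_iff_injective]
      intro p _ _
      exact (hempty p).elim
    have hf := (h u).2 f hmf
    rw [CategoryTheory.mono_iff_injective] at hf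
    have : (ULift.up false) = (ULift.up true) := hf rfl
    simp at this
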